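/- For every δ with 0 < δ < 1, the integral I_s(δ) := ∫₀¹ sin(2πv) / (1 − δ sin(2πv))^{3/2} dv satisfies I_s(δ) = (2/π) · 1/(δ(1−δ)√(1+δ)) · ( E(2δ/(1+δ)) − (1−δ) K(2δ/(1+δ)) ), where E(m) = ∫₀^{π/2} √(1 − m sin²θ) dθ and K(m) = ∫₀^{π/2} 1/√(1 − m sin²θ) dθ are the complete elliptic integrals of the second and first kind. -/

import Mathlib

noncomputable section

open Real intervalIntegral

/-- Complete elliptic integral of the first kind. -/
def ellipticK (m : ℝ) : ℝ :=
  ∫ θ in (0:ℝ)..(π/2), 1 / Real.sqrt (1 - m * Real.sin θ ^ 2)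

/-- Complete elliptic integral of the second kind. -/
def ellipticE (m : ℝ) : ℝ :=
  ∫ θ in (0:ℝ)..(π/2), Real.sqrt (1 - m * Real.sin θ ^ 2)

/-! ### Auxiliary lemmas -/

lemma P_pos {m : ℝ} (hm0 : 0 ≤ m) (hm1 : m < 1) (θ : ℝ) :
    0 < 1 - m * Real.sin θ ^ 2 := by
  nlinarith [Real.sin_sq_le_one θ, sq_nonneg (Real.sin θ)]

lemma rpow_three_half {x : ℝ} (hx : 0 < x) : x ^ ((3:ℝ)/2) = x * Real.sqrt x := by
  rw [show (3:ℝ)/2 = 1 + 1/2 by norm_num, Real.rpow_add hx, Real.rpow_one,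
    Real.sqrt_eq_rpow]

lemma contP {m : ℝ} : Continuous fun θ : ℝ => 1 - m * Real.sin θ ^ 2 := by
  fun_prop

lemma cont_inv_rpow {m : ℝ} (hm0 : 0 ≤ m) (hm1 : m < 1) :
    Continuous fun θ : ℝ => 1 / (1 - m * Real.sin θ ^ 2) ^ ((3:ℝ)/2) := by
  apply continuous_const.div
  · exact contP.rpow_const fun x => Or.inr (by norm_num)
  · exact fun x => ne_of_gt (Real.rpow_pos_of_pos (P_pos hm0 hm1 x) _)

lemma cont_sqrtP {m : ℝ} : Continuous fun θ : ℝ => Real.sqrt (1 - m * Real.sin θ ^ 2) :=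
  Real.continuous_sqrt.comp contP

lemma cont_inv_sqrtP {m : ℝ} (hm0 : 0 ≤ m) (hm1 : m < 1) :
    Continuous fun θ : ℝ => 1 / Real.sqrt (1 - m * Real.sin θ ^ 2) :=
  continuous_const.div cont_sqrtP fun x => ne_of_gt (Real.sqrt_pos.2 (P_pos hm0 hm1 x))

lemma key_deriv {m : ℝ} (hm0 : 0 < m) (hm1 : m < 1) (θ : ℝ) :
    HasDerivAt (fun θ => Real.sin θ * Real.cos θ / Real.sqrt (1 - m * Real.sin θ ^ 2))
      ((1/m) * Real.sqrt (1 - m * Real.sin θ ^ 2)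
        - (1/m - 1) * (1 / (1 - m * Real.sin θ ^ 2) ^ ((3:ℝ)/2))) θ := by
  have hP : 0 < 1 - m * Real.sin θ ^ 2 := P_pos hm0.le hm1 θ
  have hq : 0 < Real.sqrt (1 - m * Real.sin θ ^ 2) := Real.sqrt_pos.2 hP
  have hP' : HasDerivAt (fun θ : ℝ => 1 - m * Real.sin θ ^ 2)
      (-(m * (2 * Real.sin θ ^ 1 * Real.cos θ))) θ := by
    have := ((Real.hasDerivAt_sin θ).pow 2).const_mul m
    simpa using (this.const_sub 1)
  have hs : HasDerivAt (fun θ : ℝ => Real.sqrt (1 - m * Real.sin θ ^ 2))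
      (1 / (2 * Real.sqrt (1 - m * Real.sin θ ^ 2)) * -(m * (2 * Real.sin θ ^ 1 * Real.cos θ))) θ :=
    (Real.hasDerivAt_sqrt hP.ne').comp θ hP'
  have hN : HasDerivAt (fun θ : ℝ => Real.sin θ * Real.cos θ)
      (Real.cos θ * Real.cos θ + Real.sin θ * -Real.sin θ) θ :=
    (Real.hasDerivAt_sin θ).mul (Real.hasDerivAt_cos θ)
  have hg := hN.div hs hq.ne'
  refine hg.congr_deriv (Eq.symm ?_)
  rw [rpow_three_half hP]
  have hq2 : Real.sqrt (1 - m * Real.sin θ ^ 2) ^ 2 = 1 - m * Real.sin θ ^ 2 :=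
    Real.sq_sqrt hP.le
  have hpy : Real.sin θ ^ 2 + Real.cos θ ^ 2 = 1 := Real.sin_sq_add_cos_sq θ
  set q := Real.sqrt (1 - m * Real.sin θ ^ 2) with hqdef
  field_simp
  linear_combination
    ((1 - m * Real.sin θ ^ 2)*(q^2+(1 - m * Real.sin θ ^ 2)) - (1-m)
      - m*(1 - m * Real.sin θ ^ 2)*(Real.cos θ^2 - Real.sin θ^2)) * hq2
    + (-(m*(1 - m * Real.sin θ ^ 2))) * hpy

lemma integral_key {m : ℝ} (hm0 : 0 < m) (hm1 : m < 1) :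
    ∫ θ in (0:ℝ)..(π/2),
      ((1/m) * Real.sqrt (1 - m * Real.sin θ ^ 2)
        - (1/m - 1) * (1 / (1 - m * Real.sin θ ^ 2) ^ ((3:ℝ)/2))) = 0 := by
  have h := intervalIntegral.integral_eq_sub_of_hasDerivAt
    (f := fun θ => Real.sin θ * Real.cos θ / Real.sqrt (1 - m * Real.sin θ ^ 2))
    (a := 0) (b := π/2) (fun θ _ => key_deriv hm0 hm1 θ)
    (((continuous_const.mul cont_sqrtP).sub
      (continuous_const.mul (cont_inv_rpow hm0.le hm1))).intervalIntegrable _ _)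
  rw [h]
  simp

lemma J_eq {m : ℝ} (hm0 : 0 < m) (hm1 : m < 1) :
    ∫ θ in (0:ℝ)..(π/2), 1 / (1 - m * Real.sin θ ^ 2) ^ ((3:ℝ)/2)
      = ellipticE m / (1 - m) := by
  have h := integral_key hm0 hm1
  rw [intervalIntegral.integral_sub
      (f := fun θ => (1/m) * Real.sqrt (1 - m * Real.sin θ ^ 2))
      (g := fun θ => (1/m - 1) * (1 / (1 - m * Real.sin θ ^ 2) ^ ((3:ℝ)/2)))
      ((continuous_const.mul cont_sqrtP).intervalIntegrable _ _)
      ((continuous_const.mul (cont_inv_rpow hm0.le hm1)).intervalIntegrable _ _),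
    intervalIntegral.integral_const_mul, intervalIntegral.integral_const_mul] at h
  rw [show (∫ θ in (0:ℝ)..(π/2), Real.sqrt (1 - m * Real.sin θ ^ 2)) = ellipticE m from rfl] at h
  have h1m : (1:ℝ) - m ≠ 0 := by linarith
  have hm : m ≠ 0 := hm0.ne'
  field_simp at h ⊢
  linarith [h]

lemma T_eq {m : ℝ} (hm0 : 0 < m) (hm1 : m < 1) :
    ∫ θ in (0:ℝ)..(π/2), (2 * Real.sin θ ^ 2 - 1) / (1 - m * Real.sin θ ^ 2) ^ ((3:ℝ)/2)
      = (2/m - 1) * (ellipticE m / (1 - m)) - (2/m) * ellipticK m := by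
  have hpt : Set.EqOn
      (fun θ => (2 * Real.sin θ ^ 2 - 1) / (1 - m * Real.sin θ ^ 2) ^ ((3:ℝ)/2))
      (fun θ => (2/m - 1) * (1 / (1 - m * Real.sin θ ^ 2) ^ ((3:ℝ)/2))
          - (2/m) * (1 / Real.sqrt (1 - m * Real.sin θ ^ 2)))
      (Set.uIcc (0:ℝ) (π/2)) := by
    intro θ _
    have hP : 0 < 1 - m * Real.sin θ ^ 2 := P_pos hm0.le hm1 θ
    have hq : 0 < Real.sqrt (1 - m * Real.sin θ ^ 2) := Real.sqrt_pos.2 hP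
    have hq2 : Real.sqrt (1 - m * Real.sin θ ^ 2) ^ 2 = 1 - m * Real.sin θ ^ 2 :=
      Real.sq_sqrt hP.le
    simp only
    rw [rpow_three_half hP]
    set q := Real.sqrt (1 - m * Real.sin θ ^ 2) with hqdef
    have hm : m ≠ 0 := hm0.ne'
    have hPne : 1 - Real.sin θ ^ 2 * m ≠ 0 := by rw [mul_comm]; exact hP.ne'
    field_simp
    ring
  rw [intervalIntegral.integral_congr hpt,
    intervalIntegral.integral_sub
      (f := fun θ => (2/m - 1) * (1 / (1 - m * Real.sin θ ^ 2) ^ ((3:ℝ)/2)))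
      (g := fun θ => (2/m) * (1 / Real.sqrt (1 - m * Real.sin θ ^ 2)))
      ((continuous_const.mul (cont_inv_rpow hm0.le hm1)).intervalIntegrable _ _)
      ((continuous_const.mul (cont_inv_sqrtP hm0.le hm1)).intervalIntegrable _ _),
    intervalIntegral.integral_const_mul, intervalIntegral.integral_const_mul,
    J_eq hm0 hm1]
  rfl

/-- The integrand as a function of the full angle. -/
def auxf (δ u : ℝ) : ℝ := Real.sin u / (1 - δ * Real.sin u) ^ ((3:ℝ)/2)

def auxh (δ x : ℝ) : ℝ := Real.cos x / (1 - δ * Real.cos x) ^ ((3:ℝ)/2)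

lemma auxf_cont {δ : ℝ} (hδ0 : 0 < δ) (hδ1 : δ < 1) : Continuous (auxf δ) := by
  have hP : ∀ u : ℝ, 0 < 1 - δ * Real.sin u := by
    intro u; nlinarith [Real.neg_one_le_sin u, Real.sin_le_one u]
  apply Continuous.div Real.continuous_sin
  · exact (by fun_prop : Continuous fun u : ℝ => 1 - δ * Real.sin u).rpow_const
      fun x => Or.inr (by norm_num)
  · exact fun x => ne_of_gt (Real.rpow_pos_of_pos (hP x) _)

lemma auxh_cont {δ : ℝ} (hδ0 : 0 < δ) (hδ1 : δ < 1) : Continuous (auxh δ) := by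
  have hP : ∀ u : ℝ, 0 < 1 - δ * Real.cos u := by
    intro u; nlinarith [Real.neg_one_le_cos u, Real.cos_le_one u]
  apply Continuous.div Real.continuous_cos
  · exact (by fun_prop : Continuous fun u : ℝ => 1 - δ * Real.cos u).rpow_const
      fun x => Or.inr (by norm_num)
  · exact fun x => ne_of_gt (Real.rpow_pos_of_pos (hP x) _)

lemma auxf_periodic (δ : ℝ) : Function.Periodic (auxf δ) (2 * π) := by
  intro u; simp [auxf, Real.sin_add_two_pi]

lemma auxh_even (δ : ℝ) (x : ℝ) : auxh δ (-x) = auxh δ x := by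
  simp [auxh, Real.cos_neg]

lemma auxf_shift (δ : ℝ) (x : ℝ) : auxf δ (x + π/2) = auxh δ x := by
  simp [auxf, auxh, Real.sin_add_pi_div_two]

theorem Is_elliptic_formula (δ : ℝ) (hδ0 : 0 < δ) (hδ1 : δ < 1) :
    (∫ v in (0:ℝ)..1, Real.sin (2 * π * v)
        / (1 - δ * Real.sin (2 * π * v)) ^ ((3:ℝ)/2))
      = (2 / π) * (1 / (δ * (1 - δ) * Real.sqrt (1 + δ)))
        * (ellipticE (2 * δ / (1 + δ)) - (1 - δ) * ellipticK (2 * δ / (1 + δ))) := by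
  have hπ : (0:ℝ) < π := Real.pi_pos
  have h1δ : (0:ℝ) < 1 + δ := by linarith
  set m : ℝ := 2 * δ / (1 + δ) with hmdef
  have hm0 : 0 < m := by positivity
  have hm1 : m < 1 := by rw [hmdef, div_lt_one h1δ]; linarith
  -- Step 1: substitute u = 2πv
  have s1 : (∫ v in (0:ℝ)..1, Real.sin (2 * π * v)
        / (1 - δ * Real.sin (2 * π * v)) ^ ((3:ℝ)/2))
      = (2*π)⁻¹ * ∫ u in (0:ℝ)..(2*π), auxf δ u := by
    have h := intervalIntegral.integral_comp_mul_left (a := (0:ℝ)) (b := 1)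
      (auxf δ) (c := 2*π) (by positivity)
    simpa [auxf, smul_eq_mul] using h
  -- Step 2: periodicity, shift to [-π/2, 3π/2]
  have s2 : (∫ u in (0:ℝ)..(2*π), auxf δ u)
      = ∫ u in (-(π/2))..(-(π/2) + 2*π), auxf δ u := by
    have h := (auxf_periodic δ).intervalIntegral_add_eq 0 (-(π/2))
    simpa using h
  -- Step 3: substitute u = x + π/2
  have s3 : (∫ u in (-(π/2))..(-(π/2) + 2*π), auxf δ u)
      = ∫ x in (-π)..π, auxh δ x := by
    have h := intervalIntegral.integral_comp_add_right (a := -π) (b := π) (auxf δ) (π/2)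
    have e1 : -π + π/2 = -(π/2) := by ring
    have e2 : π + π/2 = -(π/2) + 2*π := by ring
    rw [e1, e2] at h
    rw [← h]
    exact intervalIntegral.integral_congr fun x _ => (auxf_shift δ x)
  -- Step 4: evenness
  have hInt : ∀ a b : ℝ, IntervalIntegrable (auxh δ) MeasureTheory.volume a b :=
    fun a b => (auxh_cont hδ0 hδ1).intervalIntegrable a b
  have s4 : (∫ x in (-π)..π, auxh δ x) = 2 * ∫ x in (0:ℝ)..π, auxh δ x := by
    have hneg : (∫ x in (0:ℝ)..π, auxh δ x) = ∫ x in (-π)..(0:ℝ), auxh δ x := by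
      have h := intervalIntegral.integral_comp_neg (a := (0:ℝ)) (b := π) (auxh δ)
      simp only [auxh_even δ] at h
      simpa using h
    rw [← intervalIntegral.integral_add_adjacent_intervals (hInt (-π) 0) (hInt 0 π),
      ← hneg]
    ring
  -- Step 5: substitute x = π - 2θ
  have s5 : (∫ x in (0:ℝ)..π, auxh δ x) = 2 * ∫ θ in (0:ℝ)..(π/2), auxh δ (π - 2*θ) := by
    have h := intervalIntegral.integral_comp_mul_left (a := (0:ℝ)) (b := π/2)
      (fun y => auxh δ (π - y)) (c := 2) (by norm_num)
    have h2 := intervalIntegral.integral_comp_sub_left (a := (0:ℝ)) (b := π) (auxh δ) π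
    simp only [mul_zero, sub_zero, sub_self] at h h2
    rw [show (2:ℝ) * (π/2) = π by ring] at h
    rw [h2] at h
    rw [h, smul_eq_mul]
    ring
  -- Step 6: pointwise identity for auxh δ (π - 2θ)
  have s6 : (∫ θ in (0:ℝ)..(π/2), auxh δ (π - 2*θ))
      = ((1+δ) ^ ((3:ℝ)/2))⁻¹
        * ∫ θ in (0:ℝ)..(π/2), (2 * Real.sin θ ^ 2 - 1) / (1 - m * Real.sin θ ^ 2) ^ ((3:ℝ)/2) := by
    rw [← intervalIntegral.integral_const_mul]
    apply intervalIntegral.integral_congr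
    intro θ _
    have hP : 0 < 1 - m * Real.sin θ ^ 2 := P_pos hm0.le hm1 θ
    have hc : Real.cos (π - 2*θ) = 2 * Real.sin θ ^ 2 - 1 := by
      rw [Real.cos_pi_sub, Real.cos_two_mul]
      linarith [Real.sin_sq_add_cos_sq θ]
    have hden : 1 - δ * (2 * Real.sin θ ^ 2 - 1) = (1+δ) * (1 - m * Real.sin θ ^ 2) := by
      rw [hmdef]
      field_simp
      ring
    simp only [auxh, hc, hden]
    rw [Real.mul_rpow h1δ.le hP.le]
    rw [div_mul_eq_div_div_swap, div_eq_inv_mul]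
  rw [s1, s2, s3, s4, s5, s6, T_eq hm0 hm1]
  -- Final algebra
  have hsq : Real.sqrt (1+δ) ^ 2 = 1 + δ := Real.sq_sqrt h1δ.le
  have hsqpos : 0 < Real.sqrt (1+δ) := Real.sqrt_pos.2 h1δ
  rw [rpow_three_half h1δ]
  have e1 : 2/m = (1+δ)/δ := by rw [hmdef]; field_simp
  have e2 : 1 - m = (1-δ)/(1+δ) := by rw [hmdef]; field_simp; ring
  rw [e1, e2]
  have h1mδ : (1:ℝ) - δ ≠ 0 := by linarith
  field_simp
  ring
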